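/- Let f : ℤ² → ℂ satisfy f_{n,m} − f_{n+1,m} = t^{−1/2} v_{n,m} v_{n+1,m} and f_{n,m} − f_{n,m+1} = v_{n,m} v_{n,m+1} for some function v : ℤ² → ℂ∖{0} and fixed t ∈ ℂ∖{0,1} with a fixed square root t^{1/2}. Then f satisfies the discrete Schwarzian KdV equation ((f_{n,m} − f_{n+1,m})(f_{n+1,m+1} − f_{n,m+1}))/((f_{n+1,m} − f_{n+1,m+1})(f_{n,m+1} − f_{n,m})) = 1/t, provided v satisfies the lattice modified KdV equation t^{1/2} v_{n,m} v_{n,m+1} + v_{n,m+1} v_{n+1,m+1} = v_{n,m} v_{n+1,m} + t^{1/2} v_{n+1,m} v_{n+1,m+1}, and conversely the existence of f with the two stated edge relations (consistency around a quadrilateral) is equivalent to v satisfying the lattice modified KdV equation. -/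

import Mathlib

/-- Discrete antiderivative over ℤ. -/
noncomputable def intAntidiff (h : ℤ → ℂ) (m : ℤ) : ℂ :=
  ∑ k ∈ Finset.range m.toNat, h k - ∑ k ∈ Finset.range (-m).toNat, h (-(k + 1))

lemma intAntidiff_step (h : ℤ → ℂ) (m : ℤ) :
    intAntidiff h (m + 1) = intAntidiff h m + h m := by
  unfold intAntidiff
  rcases le_or_gt 0 m with hm | hm
  · have h1 : (m + 1).toNat = m.toNat + 1 := by omega
    have h2 : (-(m + 1)).toNat = 0 := by omega
    have h3 : (-m).toNat = 0 := by omega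
    rw [h1, h2, h3, Finset.sum_range_succ]
    rw [show ((m.toNat : ℤ)) = m from by omega]
    simp
  · have h1 : (m + 1).toNat = 0 := by omega
    have h2 : m.toNat = 0 := by omega
    have h3 : (-m).toNat = (-(m + 1)).toNat + 1 := by omega
    rw [h1, h2, h3, Finset.sum_range_succ]
    rw [show (-((((-(m + 1)).toNat : ℤ)) + 1)) = m from by omega]
    simp

theorem discrete_SKdV_mKdV_correspondence
    (t s : ℂ) (ht0 : t ≠ 0) (ht1 : t ≠ 1) (hs : s ^ 2 = t)
    (v : ℤ → ℤ → ℂ) (hv : ∀ n m, v n m ≠ 0) :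
    ((∃ f : ℤ → ℤ → ℂ, ∀ n m : ℤ,
        f n m - f (n + 1) m = s⁻¹ * (v n m * v (n + 1) m) ∧
        f n m - f n (m + 1) = v n m * v n (m + 1)) ↔
      (∀ n m : ℤ,
        s * (v n m * v n (m + 1)) + v n (m + 1) * v (n + 1) (m + 1) =
          v n m * v (n + 1) m + s * (v (n + 1) m * v (n + 1) (m + 1)))) ∧
    (∀ f : ℤ → ℤ → ℂ,
      (∀ n m : ℤ,
        f n m - f (n + 1) m = s⁻¹ * (v n m * v (n + 1) m) ∧
        f n m - f n (m + 1) = v n m * v n (m + 1)) →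
      (∀ n m : ℤ,
        s * (v n m * v n (m + 1)) + v n (m + 1) * v (n + 1) (m + 1) =
          v n m * v (n + 1) m + s * (v (n + 1) m * v (n + 1) (m + 1))) →
      ∀ n m : ℤ,
        ((f n m - f (n + 1) m) * (f (n + 1) (m + 1) - f n (m + 1))) /
          ((f (n + 1) m - f (n + 1) (m + 1)) * (f n (m + 1) - f n m)) = 1 / t) := by
  have hs0 : s ≠ 0 := by
    intro h; apply ht0; rw [← hs, h]; ring
  constructor
  · constructor
    · -- existence of f ⇒ mKdV
      rintro ⟨f, hf⟩ n m
      have e1 := (hf n m).1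
      have e2 := (hf n m).2
      have e3 := (hf (n + 1) m).2
      have e4 := (hf n (m + 1)).1
      have key : s⁻¹ * (v n m * v (n + 1) m) + v (n + 1) m * v (n + 1) (m + 1)
          = v n m * v n (m + 1) + s⁻¹ * (v n (m + 1) * v (n + 1) (m + 1)) := by
        rw [← e1, ← e2, ← e3, ← e4]; ring
      field_simp at key
      linear_combination -key
    · -- mKdV ⇒ existence of f
      intro hmkdv
      have hYstep : ∀ n m : ℤ,
          intAntidiff (fun k => -(v n k * v n (k + 1))) (m + 1)
            = intAntidiff (fun k => -(v n k * v n (k + 1))) m - v n m * v n (m + 1) := by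
        intro n m; rw [intAntidiff_step]; ring
      have hXstep : ∀ n : ℤ,
          intAntidiff (fun k => -(s⁻¹ * (v k 0 * v (k + 1) 0))) (n + 1)
            = intAntidiff (fun k => -(s⁻¹ * (v k 0 * v (k + 1) 0))) n
              - s⁻¹ * (v n 0 * v (n + 1) 0) := by
        intro n; rw [intAntidiff_step]; ring
      have hY0 : ∀ n : ℤ, intAntidiff (fun k => -(v n k * v n (k + 1))) 0 = 0 := by
        intro n; simp [intAntidiff]
      refine ⟨fun n m => intAntidiff (fun k => -(s⁻¹ * (v k 0 * v (k + 1) 0))) n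
          + intAntidiff (fun k => -(v n k * v n (k + 1))) m, fun n m => ?_⟩
      set X : ℤ → ℂ := intAntidiff (fun k => -(s⁻¹ * (v k 0 * v (k + 1) 0))) with hX
      set Y : ℤ → ℤ → ℂ := fun n => intAntidiff (fun k => -(v n k * v n (k + 1))) with hYdef
      constructor
      · -- horizontal relation, by induction on m
        have H : ∀ m : ℤ, (X n + Y n m) - (X (n + 1) + Y (n + 1) m)
            = s⁻¹ * (v n m * v (n + 1) m) := by
          intro m
          induction m using Int.induction_on with
          | zero =>
            have h1 : Y n 0 = 0 := hY0 n
            have h2 : Y (n + 1) 0 = 0 := hY0 (n + 1)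
            rw [h1, h2, hXstep]; ring
          | succ k ih =>
            have hk := hmkdv n k
            have h1 : Y n (k + 1) = Y n k - v n k * v n (k + 1) := hYstep n k
            have h2 : Y (n + 1) (k + 1) = Y (n + 1) k - v (n + 1) k * v (n + 1) (k + 1) :=
              hYstep (n + 1) k
            rw [h1, h2]
            have e : (X n + (Y n k - v n k * v n (k + 1))) -
                (X (n + 1) + (Y (n + 1) k - v (n + 1) k * v (n + 1) (k + 1)))
                = s⁻¹ * (v n k * v (n + 1) k) - v n k * v n (k + 1)
                  + v (n + 1) k * v (n + 1) (k + 1) := by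
              rw [← ih]; ring
            rw [e]
            field_simp
            linear_combination -hk
          | pred k ih =>
            have hk := hmkdv n (-k - 1)
            have h1 := hYstep n (-k - 1)
            have h2 := hYstep (n + 1) (-k - 1)
            rw [show (-k - 1 + 1 : ℤ) = -k from by ring] at h1 h2
            rw [show (-k - 1 + 1 : ℤ) = -k from by ring] at hk
            have ih' : (X n + Y n (-k)) - (X (n + 1) + Y (n + 1) (-k))
                = s⁻¹ * (v n (-k) * v (n + 1) (-k)) := by
              rw [show (-(k:ℤ)) = -k from rfl]; exact_mod_cast ih
            have h1' : Y n (-(k:ℤ)) = Y n (-k - 1) - v n (-k - 1) * v n (-k) := h1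
            have h2' : Y (n + 1) (-(k:ℤ))
                = Y (n + 1) (-k - 1) - v (n + 1) (-k - 1) * v (n + 1) (-k) := h2
            rw [h1', h2'] at ih'
            have e : (X n + Y n (-k - 1)) - (X (n + 1) + Y (n + 1) (-k - 1))
                = s⁻¹ * (v n (-k) * v (n + 1) (-k)) + v n (-k - 1) * v n (-k)
                  - v (n + 1) (-k - 1) * v (n + 1) (-k) := by
              linear_combination ih'
            rw [e]
            field_simp
            linear_combination hk
        exact H m
      · show (X n + Y n m) - (X n + Y n (m + 1)) = v n m * v n (m + 1)
        rw [show Y n (m + 1) = Y n m - v n m * v n (m + 1) from hYstep n m]; ring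
  · -- cross-ratio
    intro f hf hmkdv n m
    have e1 := (hf n m).1
    have e2 := (hf n m).2
    have e3 := (hf (n + 1) m).2
    have e4 := (hf n (m + 1)).1
    have h4 : f (n + 1) (m + 1) - f n (m + 1)
        = -(s⁻¹ * (v n (m + 1) * v (n + 1) (m + 1))) := by
      linear_combination -e4
    have h2 : f n (m + 1) - f n m = -(v n m * v n (m + 1)) := by
      linear_combination -e2
    rw [e1, e3, h4, h2, ← hs]
    field_simp [hv n m, hv (n + 1) m, hv n (m + 1), hv (n + 1) (m + 1)]
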